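/- Let α > 0, β, γ ∈ ℝ. Suppose there exist μ ≤ −4π² and Λ ∈ ℝ with 2Λ(1+Λ) = μ(2(1+Λ)γ − β²) such that λ = αμ + Λ > 0. Then β²/2 > (α+γ)(1 − μα). Conversely, if β²/2 > (α+γ)(1 + 4π²α) then, choosing μ = −4π², there is a real solution Λ of the quadratic 2Λ(1+Λ) = μ(2(1+Λ)γ − β²) with αμ + Λ > 0. -/
import Mathlib


open Real

/-- Algebraic instability criterion for the symmetrized linearized operators.
Forward: if there is an admissible mode `μ ≤ −4π²` and `Λ` solving the quadratic
`2Λ(1+Λ) = μ(2(1+Λ)γ − β²)` with eigenvalue `λ = αμ + Λ > 0`, then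
`β²/2 > (α+γ)(1 − μα)`. Conversely, if `β²/2 > (α+γ)(1 + 4π²α)` then the lowest mode
`μ = −4π²` admits a real solution `Λ` of the quadratic with `αμ + Λ > 0`. -/
theorem stmt5 (α β γ : ℝ) (hα : 0 < α) :
    (∀ μ Λ : ℝ, μ ≤ -4 * π ^ 2 →
        2 * Λ * (1 + Λ) = μ * (2 * (1 + Λ) * γ - β ^ 2) →
        0 < α * μ + Λ →
        β ^ 2 / 2 > (α + γ) * (1 - μ * α)) ∧
    (β ^ 2 / 2 > (α + γ) * (1 + 4 * π ^ 2 * α) →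
      ∃ Λ : ℝ, 2 * Λ * (1 + Λ) = (-4 * π ^ 2) * (2 * (1 + Λ) * γ - β ^ 2) ∧
        0 < α * (-4 * π ^ 2) + Λ) := by
  have hπ : 0 < π := pi_pos
  constructor
  · intro μ Λ hμ hq hlam
    have hμ0 : μ < 0 := lt_of_le_of_lt hμ (by nlinarith)
    by_contra hcon
    push_neg at hcon
    -- hcon : β^2/2 ≤ (α+γ)(1−μα)
    obtain ⟨Λ', hΛ'⟩ : ∃ x : ℝ, x = μ * γ - 1 - Λ := ⟨_, rfl⟩
    -- factorization of f(−αμ)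
    have hfac : μ * (β ^ 2 - 2 * (α + γ) * (1 - α * μ)) =
        2 * (-(α * μ) - Λ) * (-(α * μ) - Λ') := by
      rw [hΛ']; nlinarith [hq]
    have h1 : 0 ≤ μ * (β ^ 2 - 2 * (α + γ) * (1 - α * μ)) := by
      have : β ^ 2 - 2 * (α + γ) * (1 - α * μ) ≤ 0 := by nlinarith
      nlinarith
    have h2 : -(α * μ) - Λ < 0 := by linarith
    have ht : 0 < -(α * μ) := by nlinarith
    have hΛ'pos : 0 < Λ' := by
      by_contra hne
      push_neg at hne
      have h4 : 0 < -(α * μ) - Λ' := by linarith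
      have h5 : (-(α * μ) - Λ) * (-(α * μ) - Λ') < 0 :=
        mul_neg_of_neg_of_pos h2 h4
      linarith [hfac, h1]
    have hΛpos : 0 < Λ := by linarith
    have hsum : 0 < μ * γ - 1 := by
      have : Λ + Λ' = μ * γ - 1 := by rw [hΛ']; ring
      linarith
    have hprod : Λ * Λ' = μ * (β ^ 2 - 2 * γ) / 2 := by
      rw [hΛ']; nlinarith [hq]
    have hγ : γ < 0 := by nlinarith
    nlinarith [mul_pos hΛpos hΛ'pos, sq_nonneg β]
  · intro h
    obtain ⟨μ, hμdef⟩ : ∃ x : ℝ, x = -4 * π ^ 2 := ⟨_, rfl⟩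
    have hμ0 : μ < 0 := by rw [hμdef]; nlinarith
    obtain ⟨b, hb⟩ : ∃ x : ℝ, x = (μ * γ - 1) / 2 := ⟨_, rfl⟩
    obtain ⟨c, hc⟩ : ∃ x : ℝ, x = μ * (β ^ 2 - 2 * γ) - (1 - μ * γ) ^ 2 / 2 := ⟨_, rfl⟩
    obtain ⟨t₀, ht₀⟩ : ∃ x : ℝ, x = -(α * μ) := ⟨_, rfl⟩
    -- f(t₀) < 0
    have hft₀ : 2 * t₀ ^ 2 + 2 * (1 - μ * γ) * t₀ + μ * (β ^ 2 - 2 * γ) < 0 := by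
      have hkey : β ^ 2 - 2 * (α + γ) * (1 - α * μ) > 0 := by
        rw [hμdef]; nlinarith
      have heq : 2 * t₀ ^ 2 + 2 * (1 - μ * γ) * t₀ + μ * (β ^ 2 - 2 * γ) =
          μ * (β ^ 2 - 2 * (α + γ) * (1 - α * μ)) := by rw [ht₀]; ring
      rw [heq]
      nlinarith
    -- c ≤ f(t₀) < 0
    have hcneg : c < 0 := by
      have heq : c = (2 * t₀ ^ 2 + 2 * (1 - μ * γ) * t₀ + μ * (β ^ 2 - 2 * γ))
          - 2 * (t₀ - b) ^ 2 := by rw [hc, hb, ht₀]; ring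
      nlinarith [sq_nonneg (t₀ - b)]
    obtain ⟨s, hs⟩ : ∃ x : ℝ, x = Real.sqrt (-c / 2) := ⟨_, rfl⟩
    have hs2 : s ^ 2 = -c / 2 := by
      rw [hs, sq_sqrt (by linarith)]
    have hsnn : 0 ≤ s := hs ▸ Real.sqrt_nonneg _
    refine ⟨b + s, ?_, ?_⟩
    · -- the quadratic equation
      have heq : 2 * (b + s) * (1 + (b + s)) - μ * (2 * (1 + (b + s)) * γ - β ^ 2)
          = 2 * s ^ 2 + c := by rw [hb, hc]; ring
      have h2 : 2 * s ^ 2 + c = 0 := by rw [hs2]; ring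
      rw [← hμdef]
      linarith [heq, h2]
    · -- α μ + (b + s) > 0, i.e. b + s > t₀
      have hlt : (t₀ - b) ^ 2 < s ^ 2 := by
        have heq : (t₀ - b) ^ 2 = ((2 * t₀ ^ 2 + 2 * (1 - μ * γ) * t₀ +
            μ * (β ^ 2 - 2 * γ)) - c) / 2 := by rw [hb, hc]; ring
        rw [heq, hs2]
        linarith
      have hgt : t₀ - b < s := by nlinarith
      have : -4 * π ^ 2 = μ := hμdef.symm
      rw [this]
      rw [ht₀] at hgt
      linarith
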